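/- arXiv:2405.13904 — 2 statements merged into one kernel-verified Lean document; each statement's English description precedes it below -/
import Mathlib

section
/- Let y : ℝ → ℝ be continuous with |y(t)| ≤ c < b, and let (t_n) be IF-TEM firing times with parameters b, κ, δ. Then in any time interval of length T there are at least ⌊T·(b−c)/(κδ)⌋ firing instants; in particular if (b−c)/(κδ) ≥ (8K+2)/T then at least 8K+2 firings occur in an interval of length T. -/
open intervalIntegral

theorem stmt_2 (y : ℝ → ℝ) (c b κ δ T : ℝ) (K : ℕ) (hK : 0 < K)
    (hy : Continuous y) (hc : ∀ t, |y t| ≤ c) (hb : c < b)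
    (hκ : 0 < κ) (hδ : 0 < δ) (hT : 0 < T)
    (t : ℤ → ℝ) (hmono : StrictMono t)
    (hfire : ∀ n : ℤ, (1 / κ) * ∫ s in (t n)..(t (n + 1)), (y s + b) = δ) :
    (∀ a : ℝ, ⌊T * (b - c) / (κ * δ)⌋ ≤ ({n : ℤ | t n ∈ Set.Icc a (a + T)}.ncard : ℤ)) ∧
    ((b - c) / (κ * δ) ≥ (8 * K + 2) / T →
      ∀ a : ℝ, 8 * K + 2 ≤ {n : ℤ | t n ∈ Set.Icc a (a + T)}.ncard) := by
  classical
  have hc0 : 0 ≤ c := le_trans (abs_nonneg _) (hc 0)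
  have hbc : (0:ℝ) < b - c := by linarith
  have hbc' : (0:ℝ) < b + c := by linarith
  have hκδ : 0 < κ * δ := mul_pos hκ hδ
  set G : ℝ := κ * δ / (b - c) with hG
  set g : ℝ := κ * δ / (b + c) with hg
  have hGpos : 0 < G := div_pos hκδ hbc
  have hgpos : 0 < g := div_pos hκδ hbc'
  have hgap : ∀ n : ℤ, t n + g ≤ t (n + 1) ∧ t (n + 1) ≤ t n + G := by
    intro n
    have hlt : t n < t (n + 1) := hmono (by omega)
    have hint : (∫ s in (t n)..(t (n + 1)), (y s + b)) = κ * δ := by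
      have h := hfire n
      field_simp at h
      linarith
    have hintg : IntervalIntegrable (fun s => y s + b) MeasureTheory.volume (t n) (t (n+1)) :=
      ((hy.add continuous_const).intervalIntegrable _ _)
    have h1 : (t (n+1) - t n) * (b - c) ≤ ∫ s in (t n)..(t (n + 1)), (y s + b) := by
      have := intervalIntegral.integral_mono_on (f := fun _ => b - c)
        (g := fun s => y s + b) hlt.le intervalIntegrable_const hintg
        (fun s _ => by have := (abs_le.mp (hc s)).1; linarith)
      rw [intervalIntegral.integral_const, smul_eq_mul] at this
      linarith
    have h2 : (∫ s in (t n)..(t (n + 1)), (y s + b)) ≤ (t (n+1) - t n) * (b + c) := by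
      have := intervalIntegral.integral_mono_on (f := fun s => y s + b)
        (g := fun _ => b + c) hlt.le hintg intervalIntegrable_const
        (fun s _ => by have := (abs_le.mp (hc s)).2; linarith)
      rw [intervalIntegral.integral_const, smul_eq_mul] at this
      linarith
    rw [hint] at h1 h2
    constructor
    · have : g ≤ t (n+1) - t n := by rw [hg, div_le_iff₀ hbc']; linarith
      linarith
    · have : t (n+1) - t n ≤ G := by rw [hG, le_div_iff₀ hbc]; linarith
      linarith
  have hup : ∀ (n : ℤ) (k : ℕ), t (n + k) ≤ t n + k * G := by
    intro n k
    induction k with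
    | zero => simp
    | succ k ih =>
      have h := (hgap (n + k)).2
      have e : n + ((k : ℤ) + 1) = (n + k) + 1 := by ring
      push_cast
      rw [e]
      push_cast at ih
      linarith
  have hlow : ∀ (n : ℤ) (k : ℕ), t n + k * g ≤ t (n + k) := by
    intro n k
    induction k with
    | zero => simp
    | succ k ih =>
      have h := (hgap (n + k)).1
      have e : n + ((k : ℤ) + 1) = (n + k) + 1 := by ring
      push_cast
      rw [e]
      push_cast at ih
      linarith
  have part1 : ∀ a : ℝ, ⌊T * (b - c) / (κ * δ)⌋ ≤ ({n : ℤ | t n ∈ Set.Icc a (a + T)}.ncard : ℤ) := by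
    intro a
    set N : ℤ := ⌊T * (b - c) / (κ * δ)⌋ with hNdef
    by_cases hN : N ≤ 0
    · exact le_trans hN (Int.natCast_nonneg _)
    push_neg at hN
    have hNGreal : (N : ℝ) * G ≤ T := by
      have h1 : (N:ℝ) ≤ T * (b - c) / (κ * δ) := Int.floor_le _
      rw [le_div_iff₀ hκδ] at h1
      rw [hG, ← mul_div_assoc, div_le_iff₀ hbc]
      linarith
    -- existence of a greatest m with t m < a
    obtain ⟨k₁, hk₁⟩ := exists_nat_gt ((t 0 - a) / g)
    have hne : ∃ z : ℤ, t z < a := by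
      refine ⟨-(k₁:ℤ), ?_⟩
      have h := hlow (-(k₁:ℤ)) k₁
      rw [show -(k₁:ℤ) + (k₁:ℤ) = 0 by ring] at h
      rw [div_lt_iff₀ hgpos] at hk₁
      linarith
    obtain ⟨k₂, hk₂⟩ := exists_nat_gt ((a - t 0) / g)
    have hbdd : ∃ b' : ℤ, ∀ z : ℤ, t z < a → z ≤ b' := by
      refine ⟨(k₂:ℤ), fun z hz => ?_⟩
      have h := hlow 0 k₂
      rw [zero_add] at h
      rw [div_lt_iff₀ hgpos] at hk₂
      have : t z < t (k₂:ℤ) := by linarith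
      exact (hmono.lt_iff_lt.mp this).le
    obtain ⟨m, hm, hmax⟩ := Int.exists_greatest_of_bdd hbdd hne
    have hma : a ≤ t (m + 1) := by
      by_contra hcon
      push_neg at hcon
      have := hmax (m+1) hcon
      omega
    have hFsub : ∀ n ∈ Finset.Icc (m+1) (m+N), t n ∈ Set.Icc a (a + T) := by
      intro n hn
      rw [Finset.mem_Icc] at hn
      refine ⟨le_trans hma (hmono.le_iff_le.mpr hn.1), ?_⟩
      set k : ℕ := (n - m).toNat with hk
      have hkk : (k : ℤ) = n - m := Int.toNat_of_nonneg (by omega)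
      have h := hup m k
      rw [show m + (k:ℤ) = n by omega] at h
      have hkN : (k:ℝ) ≤ (N:ℝ) := by exact_mod_cast (show (k:ℤ) ≤ N by omega)
      have hkG : (k:ℝ) * G ≤ (N:ℝ) * G := mul_le_mul_of_nonneg_right hkN hGpos.le
      linarith
    obtain ⟨M, hM⟩ := exists_nat_gt (T / g)
    have hSfin : {n : ℤ | t n ∈ Set.Icc a (a + T)}.Finite := by
      apply Set.Finite.subset (Set.finite_Ioo m (m + M + 1))
      intro n hn
      simp only [Set.mem_setOf_eq, Set.mem_Icc] at hn
      have h1 : m < n := hmono.lt_iff_lt.mp (lt_of_lt_of_le hm hn.1)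
      refine ⟨h1, ?_⟩
      by_contra hcon
      push_neg at hcon
      set k : ℕ := (n - m - 1).toNat with hk
      have hkk : (k:ℤ) = n - m - 1 := Int.toNat_of_nonneg (by omega)
      have h := hlow (m+1) k
      rw [show m + 1 + (k:ℤ) = n by omega] at h
      have hMk : (M:ℝ) ≤ (k:ℝ) := by exact_mod_cast (show (M:ℤ) ≤ (k:ℤ) by omega)
      rw [div_lt_iff₀ hgpos] at hM
      have hMg : (M:ℝ) * g ≤ (k:ℝ) * g := mul_le_mul_of_nonneg_right hMk hgpos.le
      have := hn.2
      linarith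
    have hsub : ↑(Finset.Icc (m+1) (m+N)) ⊆ {n : ℤ | t n ∈ Set.Icc a (a + T)} := by
      intro n hn
      exact hFsub n (by exact_mod_cast hn)
    have hcard := Set.ncard_le_ncard hsub hSfin
    rw [Set.ncard_coe_finset] at hcard
    have hIcc : (Finset.Icc (m+1) (m+N)).card = N.toNat := by
      rw [Int.card_Icc]
      congr 1
      omega
    rw [hIcc] at hcard
    omega
  refine ⟨part1, ?_⟩
  intro h a
  have hfl : (8 * (K:ℤ) + 2) ≤ ⌊T * (b - c) / (κ * δ)⌋ := by
    apply Int.le_floor.mpr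
    push_cast
    rw [ge_iff_le, div_le_div_iff₀ hT hκδ] at h
    rw [le_div_iff₀ hκδ]
    nlinarith
  have h2 := part1 a
  have : (8 * (K:ℤ) + 2) ≤ ({n : ℤ | t n ∈ Set.Icc a (a + T)}.ncard : ℤ) := le_trans hfl h2
  exact_mod_cast this
end

section
/- Suppose X[m] = Σ_{k=1}^K v_k u_k^m for m = 1, …, 2K, where the u_k ∈ ℂ \ {0} are pairwise distinct and v_k ≠ 0 for all k. Then the pairs {(u_k, v_k)}_{k=1}^K are uniquely determined by the values X[1], …, X[2K]: if also X[m] = Σ_{k=1}^{K} v'_k (u'_k)^m for distinct nonzero u'_k and nonzero v'_k, then {(u_k, v_k)} = {(u'_k, v'_k)} as sets. -/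
lemma vdm_zero {N : ℕ} (x : Fin N → ℂ) (hx : Function.Injective x)
    (hx0 : ∀ i, x i ≠ 0) (w : Fin N → ℂ)
    (h : ∀ m : Fin N, ∑ i, w i * x i ^ ((m : ℕ) + 1) = 0) : w = 0 := by
  set M : Matrix (Fin N) (Fin N) ℂ := fun m i => x i ^ ((m : ℕ) + 1) with hM
  have hMdet : M.det ≠ 0 := by
    have hMeq : M = (Matrix.vandermonde x).transpose * Matrix.diagonal x := by
      ext m i
      simp [hM, Matrix.mul_apply, Matrix.diagonal, Matrix.vandermonde, pow_succ]
    rw [hMeq, Matrix.det_mul, Matrix.det_transpose, Matrix.det_vandermonde,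
      Matrix.det_diagonal]
    refine mul_ne_zero (Finset.prod_ne_zero_iff.2 fun i _ => ?_)
      (Finset.prod_ne_zero_iff.2 fun i _ => hx0 i)
    exact Finset.prod_ne_zero_iff.2 fun j hj =>
      sub_ne_zero_of_ne (fun he => absurd (hx he)
        (by simp at hj; omega))
  have hinj : Function.Injective M.mulVec :=
    Matrix.mulVec_injective_iff_isUnit.2 ((Matrix.isUnit_iff_isUnit_det M).2 (Ne.isUnit hMdet))
  have : M.mulVec w = M.mulVec 0 := by
    rw [Matrix.mulVec_zero]
    ext m
    rw [Matrix.mulVec, dotProduct]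
    simpa [hM, mul_comm] using h m
  exact hinj this

theorem stmt_16 (K : ℕ) (u v u' v' : Fin K → ℂ)
    (hu : Function.Injective u) (hu0 : ∀ k, u k ≠ 0) (hv0 : ∀ k, v k ≠ 0)
    (hu' : Function.Injective u') (hu'0 : ∀ k, u' k ≠ 0) (hv'0 : ∀ k, v' k ≠ 0)
    (X : ℕ → ℂ)
    (hX : ∀ m ∈ Finset.Icc 1 (2 * K), X m = ∑ k, v k * (u k) ^ m)
    (hX' : ∀ m ∈ Finset.Icc 1 (2 * K), X m = ∑ k, v' k * (u' k) ^ m) :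
    Set.range (fun k => (u k, v k)) = Set.range (fun k => (u' k, v' k)) := by
  classical
  set T : Finset ℂ := Finset.image u Finset.univ ∪ Finset.image u' Finset.univ with hT
  set N := T.card with hN
  have hNle : N ≤ 2 * K := by
    calc N ≤ (Finset.image u Finset.univ).card + (Finset.image u' Finset.univ).card :=
          Finset.card_union_le _ _
      _ ≤ K + K := by
          gcongr <;> simpa using Finset.card_image_le.trans (by simp)
      _ = 2 * K := by ring
  set w0 : ℂ → ℂ := fun y =>
    (∑ k ∈ Finset.univ.filter (fun k => u k = y), v k)
      - ∑ k ∈ Finset.univ.filter (fun k => u' k = y), v' k with hw0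
  -- key: ∀ y ∈ T, w0 y = 0
  have key : ∀ y ∈ T, w0 y = 0 := by
    set e := T.equivFin with he
    set x : Fin N → ℂ := fun i => (e.symm i : ℂ) with hx
    have hxinj : Function.Injective x := by
      intro a b hab
      have := Subtype.ext hab
      exact e.symm.injective this
    have hx0 : ∀ i, x i ≠ 0 := by
      intro i
      have hmem : (x i) ∈ T := (e.symm i).2
      simp only [hT, Finset.mem_union, Finset.mem_image] at hmem
      rcases hmem with ⟨k, _, hk⟩ | ⟨k, _, hk⟩
      · exact hk ▸ hu0 k
      · exact hk ▸ hu'0 k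
    have hsum : ∀ m ∈ Finset.Icc 1 (2 * K), ∑ i, w0 (x i) * x i ^ m = 0 := by
      intro m hm
      have h1 : ∑ i, w0 (x i) * x i ^ m = ∑ y ∈ T, w0 y * y ^ m := by
        rw [← Finset.sum_coe_sort T (fun y => w0 y * y ^ m),
          ← Equiv.sum_comp e.symm (fun a : T => w0 (a : ℂ) * (a : ℂ) ^ m)]
      have hmapsto : ∀ k, u k ∈ T := fun k => by
        simp [hT]
      have hmapsto' : ∀ k, u' k ∈ T := fun k => by
        simp [hT]
      have h2 : ∑ y ∈ T, (∑ k ∈ Finset.univ.filter (fun k => u k = y), v k) * y ^ m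
          = ∑ k, v k * u k ^ m := by
        rw [← Finset.sum_fiberwise_of_maps_to (fun k _ => hmapsto k)
          (fun k => v k * u k ^ m)]
        refine Finset.sum_congr rfl fun y _ => ?_
        rw [Finset.sum_mul]
        refine Finset.sum_congr rfl fun k hk => ?_
        simp only [Finset.mem_filter] at hk
        rw [hk.2]
      have h2' : ∑ y ∈ T, (∑ k ∈ Finset.univ.filter (fun k => u' k = y), v' k) * y ^ m
          = ∑ k, v' k * u' k ^ m := by
        rw [← Finset.sum_fiberwise_of_maps_to (fun k _ => hmapsto' k)
          (fun k => v' k * u' k ^ m)]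
        refine Finset.sum_congr rfl fun y _ => ?_
        rw [Finset.sum_mul]
        refine Finset.sum_congr rfl fun k hk => ?_
        simp only [Finset.mem_filter] at hk
        rw [hk.2]
      rw [h1]
      simp only [hw0, sub_mul, Finset.sum_sub_distrib]
      rw [h2, h2', ← hX m hm, ← hX' m hm, sub_self]
    have hw : (fun i => w0 (x i)) = 0 := by
      apply vdm_zero x hxinj hx0
      intro m
      apply hsum
      simp only [Finset.mem_Icc]
      omega
    intro y hy
    have := congrFun hw (e ⟨y, hy⟩)
    simpa [hx] using this
  -- conclude
  have main : ∀ (a b : Fin K → ℂ) (a' b' : Fin K → ℂ),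
      Function.Injective a → Function.Injective a' →
      (∀ k, b k ≠ 0) →
      (∀ y, (∑ k ∈ Finset.univ.filter (fun k => a k = y), b k)
        = ∑ k ∈ Finset.univ.filter (fun k => a' k = y), b' k) →
      ∀ k, ∃ j, a' j = a k ∧ b' j = b k := by
    intro a b a' b' ha ha' hb heq k
    have hfil : Finset.univ.filter (fun j => a j = a k) = {k} := by
      ext j; simp [ha.eq_iff]
    have h := heq (a k)
    rw [hfil, Finset.sum_singleton] at h
    have hne : (Finset.univ.filter (fun j => a' j = a k)).Nonempty := by
      by_contra hc
      rw [Finset.not_nonempty_iff_eq_empty] at hc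
      rw [hc, Finset.sum_empty] at h
      exact hb k h
    obtain ⟨j, hj⟩ := hne
    simp only [Finset.mem_filter] at hj
    refine ⟨j, hj.2, ?_⟩
    have hfil' : Finset.univ.filter (fun i => a' i = a k) = {j} := by
      ext i
      simp only [Finset.mem_filter, Finset.mem_singleton, Finset.mem_univ, true_and]
      constructor
      · intro hi; exact ha' (hi.trans hj.2.symm)
      · rintro rfl; exact hj.2
    rw [hfil', Finset.sum_singleton] at h
    exact h.symm
  have heq : ∀ y, (∑ k ∈ Finset.univ.filter (fun k => u k = y), v k)
      = ∑ k ∈ Finset.univ.filter (fun k => u' k = y), v' k := by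
    intro y
    by_cases hy : y ∈ T
    · have := key y hy
      simp only [hw0] at this
      exact sub_eq_zero.mp this
    · have h1 : Finset.univ.filter (fun k => u k = y) = ∅ := by
        rw [Finset.filter_eq_empty_iff]
        intro k _ hk
        exact hy (hk ▸ (by simp [hT] : u k ∈ T))
      have h2 : Finset.univ.filter (fun k => u' k = y) = ∅ := by
        rw [Finset.filter_eq_empty_iff]
        intro k _ hk
        exact hy (hk ▸ (by simp [hT] : u' k ∈ T))
      rw [h1, h2]
      simp
  ext p
  simp only [Set.mem_range]
  constructor
  · rintro ⟨k, rfl⟩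
    obtain ⟨j, hj1, hj2⟩ := main u v u' v' hu hu' hv0 heq k
    exact ⟨j, by simp [hj1, hj2]⟩
  · rintro ⟨k, rfl⟩
    obtain ⟨j, hj1, hj2⟩ := main u' v' u v hu' hu hv'0 (fun y => (heq y).symm) k
    exact ⟨j, by simp [hj1, hj2]⟩
end
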